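/- Let A be an n×n quaternion matrix with group inverse X and Moore–Penrose inverse Y, and set Z := X·A·Y and Z' := Y·A·X. Then A²·Y is a group inverse of Z, i.e. Z(A²Y)Z = Z, (A²Y)Z(A²Y) = A²Y and Z·(A²Y) = (A²Y)·Z; likewise Y·A² is a group inverse of Z'. (In the paper's notation: (A^⊕)^# = A P_A and (A_⊕)^# = Q_A A.) -/
import Mathlib

private lemma core_aux {M : Type*} [Monoid M] (a x y : M)
    (hxa : a * x * a = a) (hc : a * x = x * a)
    (hya : a * y * a = a) (hyay : y * a * y = y) :
    ((x * a * y) * (a ^ 2 * y) * (x * a * y) = x * a * y ∧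
     (a ^ 2 * y) * (x * a * y) * (a ^ 2 * y) = a ^ 2 * y ∧
     (x * a * y) * (a ^ 2 * y) = (a ^ 2 * y) * (x * a * y)) ∧
    ((y * a * x) * (y * a ^ 2) * (y * a * x) = y * a * x ∧
     (y * a ^ 2) * (y * a * x) * (y * a ^ 2) = y * a ^ 2 ∧
     (y * a * x) * (y * a ^ 2) = (y * a ^ 2) * (y * a * x)) := by
  have p1 : ∀ w : M, a * (y * (a * w)) = a * w := by
    intro w; rw [← mul_assoc, ← mul_assoc, hya]
  have p2 : ∀ w : M, a * (x * (a * w)) = a * w := by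
    intro w; rw [← mul_assoc, ← mul_assoc, hxa]
  have pc : ∀ w : M, x * (a * w) = a * (x * w) := by
    intro w; rw [← mul_assoc, ← hc, mul_assoc]
  have r1 : ∀ w : M, w * a * y * a = w * a := by
    intro w; rw [mul_assoc w a y, mul_assoc, hya]
  have r2 : ∀ w : M, w * a * x * a = w * a := by
    intro w; rw [mul_assoc w a x, mul_assoc, hxa]
  have rc : ∀ w : M, w * a * x = w * x * a := by
    intro w; rw [mul_assoc, hc, ← mul_assoc]
  have h1 : (x * a * y) * (a ^ 2 * y) = a * y := by
    simp only [pow_two, mul_assoc]; rw [p1, pc, p2]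
  have h2 : (a ^ 2 * y) * (x * a * y) = a * y := by
    simp only [pow_two, mul_assoc]; rw [pc, p1, ← pc, p2]
  have h1' : (y * a ^ 2) * (y * a * x) = y * a := by
    simp only [pow_two, ← mul_assoc]; rw [r1, rc, r2]
  have h2' : (y * a * x) * (y * a ^ 2) = y * a := by
    simp only [pow_two, ← mul_assoc]; rw [rc, r1, ← rc, r2]
  refine ⟨⟨?_, ?_, ?_⟩, ?_, ?_, ?_⟩
  · rw [h1]; simp only [mul_assoc]; rw [pc, p1]
  · rw [h2]; simp only [pow_two, mul_assoc]; rw [p1]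
  · rw [h1, h2]
  · rw [h2']; simp only [← mul_assoc]; rw [hyay]
  · rw [h1']; simp only [pow_two, ← mul_assoc]; rw [hyay]
  · rw [h2', h1']

/-- `A²·Y` is a group inverse of the right core inverse `Z = X·A·Y`,
and `Y·A²` is a group inverse of the left core inverse `Z' = Y·A·X`. -/
theorem group_inverse_of_core_inverses {n : ℕ}
    (A X Y : Matrix (Fin n) (Fin n) (Quaternion ℝ))
    (hX1 : A * X * A = A) (hX2 : X * A * X = X) (hX3 : A * X = X * A)
    (hY1 : A * Y * A = A) (hY2 : Y * A * Y = Y)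
    (hY3 : (A * Y).conjTranspose = A * Y) (hY4 : (Y * A).conjTranspose = Y * A) :
    ((X * A * Y) * (A ^ 2 * Y) * (X * A * Y) = X * A * Y ∧
     (A ^ 2 * Y) * (X * A * Y) * (A ^ 2 * Y) = A ^ 2 * Y ∧
     (X * A * Y) * (A ^ 2 * Y) = (A ^ 2 * Y) * (X * A * Y)) ∧
    ((Y * A * X) * (Y * A ^ 2) * (Y * A * X) = Y * A * X ∧
     (Y * A ^ 2) * (Y * A * X) * (Y * A ^ 2) = Y * A ^ 2 ∧
     (Y * A * X) * (Y * A ^ 2) = (Y * A ^ 2) * (Y * A * X)) := by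
  exact core_aux A X Y hX1 hX3 hY1 hY2
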